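/- Fix a natural number r ≥ 1 and reals ν_1,…,ν_r > -1. Then lim_{n→∞} ₁F_r(-n; ν_1+1,…,ν_r+1; z/n) = ₀F_r(-; ν_1+1,…,ν_r+1; -z) uniformly on compact subsets of ℂ, where ₁F_r(-n; b_1,…,b_r; x) = Σ_{k=0}^{n} (-n)_k x^k / ((b_1)_k···(b_r)_k k!). -/

import Mathlib

set_option maxHeartbeats 1000000


open Filter

/-- Rising factorial (Pochhammer symbol). -/
noncomputable def poch (a : ℝ) (m : ℕ) : ℝ := ∏ i ∈ Finset.range m, (a + i)

lemma poch_pos {a : ℝ} (ha : 0 < a) (k : ℕ) : 0 < poch a k :=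
  Finset.prod_pos fun i _ => by positivity

lemma poch_ge_min {a : ℝ} (ha : 0 < a) (k : ℕ) : min a 1 ≤ poch a k := by
  cases k with
  | zero => simp [poch]
  | succ k =>
    unfold poch
    rw [Finset.prod_range_succ']
    have h1 : (1:ℝ) ≤ ∏ i ∈ Finset.range k, (a + ((i:ℝ) + 1)) := by
      calc (1:ℝ) = ∏ _i ∈ Finset.range k, (1:ℝ) := by simp
      _ ≤ _ := by
        apply Finset.prod_le_prod (fun _ _ => zero_le_one)
        intro i _
        have : (0:ℝ) ≤ i := Nat.cast_nonneg i
        linarith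
    have : min a 1 ≤ a := min_le_left _ _
    push_cast
    nlinarith

lemma poch_neg_eq_zero {n k : ℕ} (h : n < k) : poch (-(n:ℝ)) k = 0 := by
  apply Finset.prod_eq_zero (Finset.mem_range.2 h)
  simp

lemma abs_poch_neg_le (n k : ℕ) : |poch (-(n:ℝ)) k| ≤ (n:ℝ)^k := by
  rcases le_or_gt k n with h | h
  · rw [poch, Finset.abs_prod]
    calc ∏ i ∈ Finset.range k, |(-(n:ℝ) + i)| ≤ ∏ i ∈ Finset.range k, (n:ℝ) := by
          apply Finset.prod_le_prod (fun i _ => abs_nonneg _)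
          intro i hi
          rw [Finset.mem_range] at hi
          have h1 : (i:ℝ) ≤ n := by exact_mod_cast (hi.le.trans h)
          have h2 : (0:ℝ) ≤ i := Nat.cast_nonneg i
          rw [abs_le]; constructor <;> linarith
      _ = (n:ℝ)^k := by rw [Finset.prod_const, Finset.card_range]
  · rw [poch_neg_eq_zero h, abs_zero]
    positivity

lemma tendsto_poch_ratio (k : ℕ) :
    Tendsto (fun n : ℕ => poch (-(n:ℝ)) k / (n:ℝ)^k) atTop (nhds ((-1:ℝ)^k)) := by
  have hlim : Tendsto (fun n : ℕ => ∏ i ∈ Finset.range k, ((-(n:ℝ) + i)/n)) atTop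
      (nhds (∏ _i ∈ Finset.range k, (-1:ℝ))) := by
    apply tendsto_finset_prod
    intro i _
    have h1 : Tendsto (fun n : ℕ => (-1:ℝ) + (i:ℝ) * (1/n)) atTop (nhds ((-1:ℝ) + (i:ℝ) * 0)) :=
      tendsto_const_nhds.add (tendsto_const_nhds.mul tendsto_one_div_atTop_nhds_zero_nat)
    rw [mul_zero, add_zero] at h1
    apply h1.congr'
    filter_upwards [eventually_ge_atTop 1] with n hn
    have hn' : (n:ℝ) ≠ 0 := Nat.cast_ne_zero.mpr (by omega)
    field_simp
  rw [Finset.prod_const, Finset.card_range] at hlim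
  apply hlim.congr'
  filter_upwards [eventually_ge_atTop 1] with n hn
  have hn' : (n:ℝ) ≠ 0 := Nat.cast_ne_zero.mpr (by omega)
  rw [Finset.prod_div_distrib, Finset.prod_const, Finset.card_range]
  rfl

lemma abs_poch_ratio_le (n k : ℕ) : |poch (-(n:ℝ)) k / (n:ℝ)^k| ≤ 1 := by
  rcases Nat.eq_zero_or_pos n with rfl | hn
  · rcases Nat.eq_zero_or_pos k with rfl | hk
    · simp [poch]
    · rw [poch_neg_eq_zero hk]
      simp
  · have hn' : (0:ℝ) < (n:ℝ)^k := by positivity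
    rw [abs_div, abs_of_pos hn', div_le_one hn']
    exact abs_poch_neg_le n k

/-- `₁F_r(-n; ν_1+1,…,ν_r+1; z/n) → ₀F_r(-; ν_1+1,…,ν_r+1; -z)` uniformly on compact
subsets of `ℂ`. -/
theorem oneF_r_tendsto_zeroF_r (r : ℕ) (hr : 1 ≤ r) (ν : Fin r → ℝ)
    (hν : ∀ j, ν j > -1) :
    ∀ K : Set ℂ, IsCompact K →
      TendstoUniformlyOn
        (fun (n : ℕ) (z : ℂ) => ∑ k ∈ Finset.range (n + 1),
          (poch (-(n : ℝ)) k : ℂ) * (z / (n : ℂ)) ^ k /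
            ((∏ j, (poch (ν j + 1) k : ℂ)) * (k.factorial : ℂ)))
        (fun z : ℂ => ∑' k : ℕ,
          (-z) ^ k / ((∏ j, (poch (ν j + 1) k : ℂ)) * (k.factorial : ℂ)))
        atTop K := by
  intro K hK
  obtain ⟨R₀, hR₀⟩ := hK.isBounded.exists_norm_le
  set R : ℝ := max R₀ 0 with hRdef
  have hR : ∀ z ∈ K, ‖z‖ ≤ R := fun z hz => (hR₀ z hz).trans (le_max_left _ _)
  have hR0 : (0:ℝ) ≤ R := le_max_right _ _
  set D : ℕ → ℝ := fun k => (∏ j, poch (ν j + 1) k) * k.factorial with hD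
  have hνpos : ∀ j, (0:ℝ) < ν j + 1 := fun j => by linarith [hν j]
  have hDpos : ∀ k, 0 < D k := fun k =>
    mul_pos (Finset.prod_pos fun j _ => poch_pos (hνpos j) k)
      (by exact_mod_cast k.factorial_pos)
  have hDcast : ∀ k : ℕ, ((D k : ℝ) : ℂ)
      = (∏ j, ((poch (ν j + 1) k : ℝ) : ℂ)) * ((k.factorial : ℕ) : ℂ) := by
    intro k
    simp [hD]
  set M : ℕ → ℝ := fun k => R ^ k / D k with hM
  have hMnonneg : ∀ k, 0 ≤ M k := fun k => div_nonneg (by positivity) (hDpos k).le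
  have hMsum : Summable M := by
    set c : ℝ := ∏ j, min (ν j + 1) 1 with hc
    have hcpos : 0 < c := Finset.prod_pos fun j _ => lt_min (hνpos j) one_pos
    apply Summable.of_nonneg_of_le hMnonneg ?_
      ((Real.summable_pow_div_factorial R).mul_left (1/c))
    intro k
    have h1 : c ≤ ∏ j, poch (ν j + 1) k :=
      Finset.prod_le_prod (fun j _ => (lt_min (hνpos j) one_pos).le)
        (fun j _ => poch_ge_min (hνpos j) k)
    have hfact : (0:ℝ) < (k.factorial : ℝ) := by exact_mod_cast k.factorial_pos
    have h2 : c * k.factorial ≤ D k := by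
      rw [hD]
      exact mul_le_mul_of_nonneg_right h1 hfact.le
    have h3 : M k ≤ R ^ k / (c * k.factorial) := by
      simp only [hM]
      gcongr
    calc M k ≤ R ^ k / (c * k.factorial) := h3
    _ = 1/c * (R ^ k / k.factorial) := by field_simp
  -- the coefficient functions
  set C : ℕ → ℕ → ℝ := fun n k => poch (-(n:ℝ)) k / (n:ℝ)^k with hCdef
  rw [Metric.tendstoUniformlyOn_iff]
  intro ε hε
  -- choose N controlling the tail
  have htail : Tendsto (fun N => ∑' k, 2 * M (k + N)) atTop (nhds 0) :=
    tendsto_sum_nat_add (fun k => 2 * M k)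
  obtain ⟨N, hN⟩ := (htail.eventually (eventually_lt_nhds (show (0:ℝ) < ε/2 by linarith))).exists
  -- the head sum tends to 0
  have hS : Tendsto (fun n => ∑ k ∈ Finset.range N, |C n k - (-1:ℝ)^k| * (R^k / D k))
      atTop (nhds 0) := by
    have h0 : Tendsto (fun n => ∑ k ∈ Finset.range N, |C n k - (-1:ℝ)^k| * (R^k / D k))
        atTop (nhds (∑ k ∈ Finset.range N, |((-1:ℝ)^k) - (-1:ℝ)^k| * (R^k / D k))) := by
      apply tendsto_finset_sum
      intro k _
      exact (((tendsto_poch_ratio k).sub tendsto_const_nhds).abs).mul_const _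
    simpa using h0
  filter_upwards [hS.eventually (eventually_lt_nhds (show (0:ℝ) < ε/2 by linarith))]
    with n hSn z hz
  -- the two series
  set u : ℕ → ℂ := fun k => ((C n k : ℝ) : ℂ) * z^k / ((D k : ℝ) : ℂ) with hu
  set v : ℕ → ℂ := fun k => (((-1:ℝ)^k : ℝ) : ℂ) * z^k / ((D k : ℝ) : ℂ) with hv
  have hDne : ∀ k, ((D k : ℝ) : ℂ) ≠ 0 := fun k => by
    exact_mod_cast (hDpos k).ne'
  have hnorm_u : ∀ k, ‖u k‖ ≤ M k := by
    intro k
    simp only [hu, hM, norm_div, norm_mul, Complex.norm_real, norm_pow,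
      Real.norm_eq_abs, abs_of_pos (hDpos k)]
    gcongr
    · exact (hDpos k).le
    · calc |C n k| * ‖z‖^k ≤ 1 * R^k := by
            apply mul_le_mul (abs_poch_ratio_le n k) _ (by positivity) zero_le_one
            exact pow_le_pow_left₀ (norm_nonneg z) (hR z hz) k
      _ = R^k := one_mul _
  have hnorm_v : ∀ k, ‖v k‖ ≤ M k := by
    intro k
    simp only [hv, hM, norm_div, norm_mul, Complex.norm_real, norm_pow,
      Real.norm_eq_abs, abs_of_pos (hDpos k), abs_pow, abs_neg, abs_one, one_pow, one_mul,
      norm_neg, norm_one]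
    gcongr
    · exact (hDpos k).le
    · exact hR z hz
  have hsu : Summable u := Summable.of_norm_bounded hMsum hnorm_u
  have hsv : Summable v := Summable.of_norm_bounded hMsum hnorm_v
  -- difference norm formula and bounds
  have hdiff_eq : ∀ k, ‖v k - u k‖ = |C n k - (-1:ℝ)^k| * ‖z‖^k / D k := by
    intro k
    have : v k - u k = ((((-1:ℝ)^k - C n k : ℝ)) : ℂ) * z^k / ((D k : ℝ) : ℂ) := by
      rw [hu, hv]
      push_cast
      ring
    rw [this]
    simp only [norm_div, norm_mul, Complex.norm_real, norm_pow,
      Real.norm_eq_abs, abs_of_pos (hDpos k), abs_sub_comm]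
  have hdiff_le : ∀ k, ‖v k - u k‖ ≤ |C n k - (-1:ℝ)^k| * (R^k / D k) := by
    intro k
    rw [hdiff_eq k, mul_div_assoc]
    gcongr
    · exact (hDpos k).le
    · exact hR z hz
  have hdiff_le2 : ∀ k, ‖v k - u k‖ ≤ 2 * M k := by
    intro k
    calc ‖v k - u k‖ ≤ |C n k - (-1:ℝ)^k| * (R^k / D k) := hdiff_le k
    _ ≤ 2 * (R^k / D k) := by
        apply mul_le_mul_of_nonneg_right _ (hMnonneg k)
        calc |C n k - (-1:ℝ)^k| ≤ |C n k| + |(-1:ℝ)^k| := abs_sub _ _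
        _ ≤ 1 + 1 := by
            apply add_le_add (abs_poch_ratio_le n k)
            rw [abs_pow, abs_neg, abs_one, one_pow]
        _ ≤ 2 := by norm_num
      _ = 2 * M k := by simp only [hM]
  have hsn : Summable (fun k => ‖v k - u k‖) :=
    Summable.of_nonneg_of_le (fun k => norm_nonneg _) hdiff_le2 (hMsum.mul_left 2)
  -- rewrite both sides as tsums
  have hFn : (∑ k ∈ Finset.range (n + 1),
      (poch (-(n : ℝ)) k : ℂ) * (z / (n : ℂ)) ^ k /
        ((∏ j, (poch (ν j + 1) k : ℂ)) * (k.factorial : ℂ))) = ∑' k, u k := by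
    rw [tsum_eq_sum (s := Finset.range (n+1))]
    · apply Finset.sum_congr rfl
      intro k _
      rw [hu, hCdef]
      simp only []
      rw [← hDcast]
      have hzn : (z / (n:ℂ))^k = z^k / ((n:ℂ))^k := div_pow z _ k
      rw [hzn]
      push_cast
      ring
    · intro k hk
      rw [Finset.mem_range, not_lt] at hk
      have : poch (-(n:ℝ)) k = 0 := poch_neg_eq_zero (by omega)
      rw [hu, hCdef]
      simp [this]
  have hf : (∑' k : ℕ, (-z) ^ k / ((∏ j, (poch (ν j + 1) k : ℂ)) * (k.factorial : ℂ)))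
      = ∑' k, v k := by
    apply tsum_congr
    intro k
    rw [hv, ← hDcast]
    rw [neg_pow]
    push_cast
    ring
  rw [dist_eq_norm, hFn, hf, ← Summable.tsum_sub hsv hsu]
  calc ‖∑' k, (v k - u k)‖ ≤ ∑' k, ‖v k - u k‖ := norm_tsum_le_tsum_norm hsn
  _ = (∑ k ∈ Finset.range N, ‖v k - u k‖) + ∑' k, ‖v (k + N) - u (k + N)‖ :=
      (Summable.sum_add_tsum_nat_add N hsn).symm
  _ ≤ (∑ k ∈ Finset.range N, |C n k - (-1:ℝ)^k| * (R^k / D k)) + ∑' k, 2 * M (k + N) := by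
      apply add_le_add
      · exact Finset.sum_le_sum fun k _ => hdiff_le k
      · apply Summable.tsum_le_tsum (fun k => hdiff_le2 (k + N))
        · exact (summable_nat_add_iff N).mpr hsn
        · exact (summable_nat_add_iff N).mpr (hMsum.mul_left 2)
  _ < ε/2 + ε/2 := add_lt_add hSn hN
  _ = ε := by ring
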